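/- Let s be the k-th avalanche of KSPM(D) with peak sequence (p₁,…,p_q), and suppose there is a column l with all of l,…,l+D−2 fired in s. Then for any column p ≥ l+D−1: p is a peak of s if and only if p ≤ p_q + D − 1 and π(k−1)_p = D−1. -/

import Mathlib

/-- Effect of firing column `i` in KSPM(D), on height-difference configurations. -/
def step (D : ℕ) (σ : ℕ → ℕ) (i : ℕ) : ℕ → ℕ :=
  fun j =>
    if j = i then σ i - D
    else if j + 1 = i then σ j + (D - 1)
    else if j = i + D - 1 then σ j + 1
    else σ j

/-- Transition on column `i`: `σ →ᵢ σ'`. -/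
def KTrans (D : ℕ) (σ : ℕ → ℕ) (i : ℕ) (σ' : ℕ → ℕ) : Prop :=
  D ≤ σ i ∧ σ' = step D σ i

/-- A strategy (list of fired columns) is legal from `σ`. -/
def Legal (D : ℕ) : (ℕ → ℕ) → List ℕ → Prop
  | _, [] => True
  | σ, i :: s => D ≤ σ i ∧ Legal D (step D σ i) s

/-- Configuration obtained by applying a strategy. -/
def applyStrat (D : ℕ) : (ℕ → ℕ) → List ℕ → (ℕ → ℕ)
  | σ, [] => σ
  | σ, i :: s => applyStrat D (step D σ i) s

/-- Reachability `σ →* σ'`. -/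
def Reaches (D : ℕ) (σ σ' : ℕ → ℕ) : Prop :=
  ∃ s : List ℕ, Legal D σ s ∧ applyStrat D σ s = σ'

/-- A configuration is stable (a fixed point) if no transition is possible. -/
def Stable (D : ℕ) (σ : ℕ → ℕ) : Prop := ∀ i, σ i < D

/-- Initial configuration: `N` grains stacked on column 0 (height differences `(N,0,0,…)`). -/
def initConf (N : ℕ) : ℕ → ℕ := fun j => if j = 0 then N else 0

/-- `τ = π(N)`: the stable configuration reachable from `N` stacked grains. -/
def IsPi (D N : ℕ) (τ : ℕ → ℕ) : Prop := Reaches D (initConf N) τ ∧ Stable D τ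

/-- `σ^{↓0}`: add one grain on column 0. -/
def addGrain (σ : ℕ → ℕ) : ℕ → ℕ := Function.update σ 0 (σ 0 + 1)

/-- `s` is the leftmost (lexicographically minimal) strategy from `τ^{↓0}` to `τ'`. -/
def IsAvalancheFor (D : ℕ) (τ τ' : ℕ → ℕ) (s : List ℕ) : Prop :=
  Legal D (addGrain τ) s ∧ applyStrat D (addGrain τ) s = τ' ∧
    ∀ s' : List ℕ, Legal D (addGrain τ) s' → applyStrat D (addGrain τ) s' = τ' →
      ¬ List.Lex (· < ·) s' s

/-- `s` is the `k`-th avalanche: leftmost strategy from `π(k-1)^{↓0}` to `π(k)`. -/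
def IsAvalanche (D k : ℕ) (s : List ℕ) : Prop :=
  ∃ τ τ' : ℕ → ℕ, IsPi D (k - 1) τ ∧ IsPi D k τ' ∧ IsAvalancheFor D τ τ' s

/-- Position `t` (0-indexed) of strategy `s` is a peak: it exceeds all earlier fired columns. -/
def IsPeak (s : List ℕ) (t : ℕ) : Prop :=
  t < s.length ∧ ∀ t' < t, s.getD t' 0 < s.getD t 0

/-- Column `p` is a peak of `s`. -/
def IsPeakVal (s : List ℕ) (p : ℕ) : Prop :=
  ∃ t : ℕ, IsPeak s t ∧ s.getD t 0 = p

namespace KA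

/-! ### Basic lemmas -/

lemma applyStrat_append (D : ℕ) (σ : ℕ → ℕ) (u v : List ℕ) :
    applyStrat D σ (u ++ v) = applyStrat D (applyStrat D σ u) v := by
  induction u generalizing σ with
  | nil => rfl
  | cons a u ih => simp only [List.cons_append, applyStrat]; exact ih _

lemma legal_append {D : ℕ} {σ : ℕ → ℕ} {u v : List ℕ} :
    Legal D σ (u ++ v) ↔ Legal D σ u ∧ Legal D (applyStrat D σ u) v := by
  induction u generalizing σ with
  | nil => simp [Legal, applyStrat]
  | cons a u ih =>
      simp only [List.cons_append, Legal, applyStrat]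
      constructor
      · rintro ⟨h1, h2⟩
        have h3 := ih.mp h2
        exact ⟨⟨h1, h3.1⟩, h3.2⟩
      · rintro ⟨⟨h1, h2⟩, h3⟩
        exact ⟨h1, ih.mpr ⟨h2, h3⟩⟩

lemma step_le {D : ℕ} (σ : ℕ → ℕ) {i j : ℕ} (h : j ≠ i) : σ j ≤ step D σ i j := by
  simp only [step, if_neg h]; split_ifs <;> omega

lemma le_applyStrat_of_not_mem {D : ℕ} {σ : ℕ → ℕ} {w : List ℕ} {b : ℕ} (hb : b ∉ w) :
    σ b ≤ applyStrat D σ w b := by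
  induction w generalizing σ with
  | nil => exact le_rfl
  | cons a w ih =>
      exact le_trans (step_le σ (fun h => hb (h ▸ (List.mem_cons_self : a ∈ a :: w))))
        (ih (fun h => hb (List.mem_cons_of_mem _ h)))

lemma step_comm {D : ℕ} {σ : ℕ → ℕ} {a b : ℕ} (hD : 2 ≤ D) (hab : a ≠ b)
    (ha : D ≤ σ a) (hb : D ≤ σ b) :
    step D (step D σ a) b = step D (step D σ b) a := by
  funext j
  simp only [step]
  split_ifs <;> (try subst_vars) <;> omega

lemma count_cons' (a j : ℕ) (w : List ℕ) :
    (a :: w).count j = w.count j + if a = j then 1 else 0 := by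
  simp only [List.count_cons, beq_iff_eq]

theorem height_formula {D : ℕ} (hD : 2 ≤ D) {σ : ℕ → ℕ} {u : List ℕ} (hu : Legal D σ u) (j : ℕ) :
    applyStrat D σ u j + D * u.count j
      = σ j + (D - 1) * u.count (j + 1) + (if D ≤ j + 1 then u.count (j + 1 - D) else 0) := by
  induction u generalizing σ with
  | nil => simp [applyStrat]
  | cons i u ih =>
    obtain ⟨hi, hu⟩ := hu
    have H := ih hu
    simp only [applyStrat, count_cons']
    rcases eq_or_ne j i with rfl | h1
    · have hs : step D σ j j = σ j - D := by simp [step]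
      have H' := H
      rw [hs] at H'
      rw [if_neg (by omega : ¬ j = j + 1)]
      rw [if_pos rfl]
      by_cases hg : D ≤ j + 1
      · rw [if_pos hg] at H' ⊢
        rw [if_neg (by omega : ¬ j = j + 1 - D)]
        simp only [Nat.mul_add, Nat.mul_one, Nat.add_zero] at H' ⊢
        omega
      · rw [if_neg hg] at H' ⊢
        simp only [Nat.mul_add, Nat.mul_one, Nat.add_zero] at H' ⊢
        omega
    · rcases eq_or_ne (j + 1) i with e2 | h2
      · subst e2
        have hs : step D σ (j + 1) j = σ j + (D - 1) := by
          simp only [step]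
          rw [if_neg (by omega)]
          simp
        have H' := H
        rw [hs] at H'
        rw [if_neg (by omega : ¬ j + 1 = j), if_pos rfl]
        by_cases hg : D ≤ j + 1
        · rw [if_pos hg] at H' ⊢
          rw [if_neg (by omega : ¬ j + 1 = j + 1 - D)]
          simp only [Nat.mul_add, Nat.mul_one, Nat.add_zero] at H' ⊢
          omega
        · rw [if_neg hg] at H' ⊢
          simp only [Nat.mul_add, Nat.mul_one, Nat.add_zero] at H' ⊢
          omega
      · rcases eq_or_ne j (i + D - 1) with e3 | h3
        · have hs : step D σ i j = σ j + 1 := by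
            simp only [step]
            rw [if_neg (by omega), if_neg (by omega), if_pos e3]
          have H' := H
          rw [hs] at H'
          have hg : D ≤ j + 1 := by omega
          rw [if_pos hg] at H' ⊢
          rw [if_neg (by omega : ¬ i = j), if_neg (by omega : ¬ i = j + 1),
            if_pos (by omega : i = j + 1 - D)]
          simp only [Nat.mul_add, Nat.mul_one, Nat.add_zero] at H' ⊢
          omega
        · have hs : step D σ i j = σ j := by
            simp only [step]
            rw [if_neg h1, if_neg h2, if_neg h3]
          have H' := H
          rw [hs] at H'
          rw [if_neg (by omega : ¬ i = j), if_neg (by omega : ¬ i = j + 1)]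
          by_cases hg : D ≤ j + 1
          · rw [if_pos hg] at H' ⊢
            rw [if_neg (by omega : ¬ i = j + 1 - D)]
            simp only [Nat.mul_add, Nat.mul_one, Nat.add_zero] at H' ⊢
            omega
          · rw [if_neg hg] at H' ⊢
            simp only [Nat.mul_add, Nat.mul_one, Nat.add_zero] at H' ⊢
            omega

lemma promote {D : ℕ} (hD : 2 ≤ D) {σ : ℕ → ℕ} {w : List ℕ} {b : ℕ}
    (hw : Legal D σ w) (hbw : b ∈ w) (hb : D ≤ σ b) :
    Legal D σ (b :: w.erase b) ∧ applyStrat D σ (b :: w.erase b) = applyStrat D σ w := by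
  induction w generalizing σ with
  | nil => cases hbw
  | cons a w ih =>
    by_cases hab : a = b
    · subst hab
      rw [List.erase_cons_head]
      exact ⟨hw, rfl⟩
    · have hbw' : b ∈ w := by
        rcases List.mem_cons.1 hbw with h | h
        · exact absurd h.symm hab
        · exact h
      obtain ⟨ha, hw'⟩ := hw
      have hb' : D ≤ step D σ a b := le_trans hb (step_le σ (Ne.symm hab))
      obtain ⟨h1, h2⟩ := ih hw' hbw' hb'
      obtain ⟨-, h1'⟩ := h1
      have hcomm : step D (step D σ b) a = step D (step D σ a) b :=
        (step_comm hD hab ha hb).symm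
      have herase : (a :: w).erase b = a :: w.erase b :=
        List.erase_cons_tail (by simp [hab])
      have ha' : D ≤ step D σ b a := le_trans ha (step_le σ hab)
      constructor
      · rw [herase]
        exact ⟨hb, ha', by rw [hcomm]; exact h1'⟩
      · rw [herase]
        show applyStrat D (step D (step D σ b) a) (w.erase b) = applyStrat D (step D σ a) w
        rw [hcomm]
        exact h2

lemma lex_append {u x y : List ℕ} {b c : ℕ} (h : b < c) :
    List.Lex (· < ·) (u ++ b :: x) (u ++ c :: y) := by
  induction u with
  | nil => exact List.Lex.rel h
  | cons a u ih => exact List.Lex.cons ih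


/-! ### Context: a leftmost legal strategy from a stable configuration plus one grain -/

section Ctx

variable {D : ℕ} {τ τ' : ℕ → ℕ} {s : List ℕ}

/-- Bundled context hypotheses. -/
structure Ctx (D : ℕ) (τ τ' : ℕ → ℕ) (s : List ℕ) : Prop where
  hD : 2 ≤ D
  hst : Stable D τ
  hst' : Stable D τ'
  hleg : Legal D (addGrain τ) s
  happ : applyStrat D (addGrain τ) s = τ'
  hmin : ∀ s' : List ℕ, Legal D (addGrain τ) s' → applyStrat D (addGrain τ) s' = τ' →
      ¬ List.Lex (· < ·) s' s

lemma addGrain_zero (τ : ℕ → ℕ) : addGrain τ 0 = τ 0 + 1 := by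
  simp [addGrain]

lemma addGrain_ne (τ : ℕ → ℕ) {j : ℕ} (h : j ≠ 0) : addGrain τ j = τ j := by
  simp [addGrain, Function.update_of_ne h]

lemma decomp (ht : t < s.length) :
    s = s.take t ++ s.getD t 0 :: s.drop (t + 1) := by
  rw [List.getD_eq_getElem _ _ ht]
  conv_lhs => rw [← List.take_append_drop t s]
  rw [List.drop_eq_getElem_cons ht]

lemma legal_take (hc : Ctx D τ τ' s) (t : ℕ) : Legal D (addGrain τ) (s.take t) := by
  have := hc.hleg
  conv at this => rw [← List.take_append_drop t s]
  exact (legal_append.1 this).1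

lemma legal_at (hc : Ctx D τ τ' s) (ht : t < s.length) :
    D ≤ applyStrat D (addGrain τ) (s.take t) (s.getD t 0) := by
  have h := hc.hleg
  conv at h => rw [decomp ht]
  exact ((legal_append.1 h).2).1

/-- Leftmost property: at each firing, no smaller column is fireable. -/
lemma not_fireable (hc : Ctx D τ τ' s) {t b : ℕ} (ht : t < s.length)
    (hb : b < s.getD t 0) : ¬ D ≤ applyStrat D (addGrain τ) (s.take t) b := by
  intro hfire
  set σ0 := addGrain τ with hσ0
  set u := s.take t with hu
  set c := s.getD t 0 with hcv
  set v := s.drop (t + 1) with hv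
  have hs : s = u ++ c :: v := decomp ht
  have hL := hc.hleg
  rw [hs] at hL
  have hu' : Legal D σ0 u := (legal_append.1 hL).1
  have hcv' : Legal D (applyStrat D σ0 u) (c :: v) := (legal_append.1 hL).2
  have happ' : applyStrat D (applyStrat D σ0 u) (c :: v) = τ' := by
    rw [← applyStrat_append, ← hs]; exact hc.happ
  have hbmem : b ∈ c :: v := by
    by_contra hbn
    have h1 : applyStrat D (applyStrat D σ0 u) (c :: v) b
        ≥ applyStrat D σ0 u b := le_applyStrat_of_not_mem hbn
    have h2 : τ' b < D := hc.hst' b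
    rw [happ'] at h1
    omega
  have hbv : b ∈ v := by
    rcases List.mem_cons.1 hbmem with h | h
    · omega
    · exact h
  obtain ⟨hLp, hAp⟩ := promote hc.hD hcv' hbmem hfire
  have herase : (c :: v).erase b = c :: v.erase b :=
    List.erase_cons_tail (by simp; omega)
  have hleg2 : Legal D σ0 (u ++ b :: c :: v.erase b) := by
    rw [legal_append]
    refine ⟨hu', ?_⟩
    rw [herase] at hLp
    exact hLp
  have happ2 : applyStrat D σ0 (u ++ b :: c :: v.erase b) = τ' := by
    rw [applyStrat_append]
    rw [herase] at hAp
    rw [hAp]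
    exact happ'
  have hlex : List.Lex (· < ·) (u ++ b :: c :: v.erase b) (u ++ c :: v) :=
    lex_append hb
  rw [← hs] at hlex
  exact hc.hmin _ hleg2 happ2 hlex

/-- The full strategy never fires a column twice. -/
lemma s_nodup (hc : Ctx D τ τ' s) : s.Nodup := by
  have key : ∀ t, (s.take t).Nodup := by
    intro t
    induction t with
    | zero => simp
    | succ t ih =>
      by_cases ht : t < s.length
      · have hdec : s.take (t + 1) = s.take t ++ [s[t]] := by
          rw [← List.take_concat_get ht, List.concat_eq_append]
        rw [hdec]
        have hperm : (s.take t ++ [s[t]]).Perm (s[t] :: s.take t) :=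
          List.perm_append_comm
        rw [hperm.nodup_iff, List.nodup_cons]
        refine ⟨?_, ih⟩
        intro hmem
        -- s[t] already occurred in the prefix: impossible by the height formula
        have hfire : D ≤ applyStrat D (addGrain τ) (s.take t) (s.getD t 0) :=
          legal_at hc ht
        have hf := height_formula hc.hD (legal_take hc t) (s.getD t 0)
        have hcnt : 1 ≤ (s.take t).count (s.getD t 0) := by
          rw [Nat.one_le_iff_ne_zero, Ne, List.count_eq_zero]
          rw [List.getD_eq_getElem _ _ ht]
          exact fun h => h hmem
        have hle1 : (s.take t).count (s.getD t 0 + 1) ≤ 1 :=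
          List.nodup_iff_count_le_one.1 ih _
        have hle2 : (s.take t).count (s.getD t 0 + 1 - D) ≤ 1 :=
          List.nodup_iff_count_le_one.1 ih _
        have hDm : D * (s.take t).count (s.getD t 0) ≥ D * 1 :=
          Nat.mul_le_mul_left D hcnt
        have hDm2 : (D - 1) * (s.take t).count (s.getD t 0 + 1) ≤ (D - 1) * 1 :=
          Nat.mul_le_mul_left (D - 1) hle1
        have hD := hc.hD
        rw [Nat.mul_one] at hDm hDm2
        by_cases h0 : s.getD t 0 = 0
        · rw [h0] at hf hfire hcnt hDm hDm2
          rw [addGrain_zero] at hf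
          have hτ0 : τ 0 < D := hc.hst 0
          rw [if_neg (by omega : ¬ D ≤ 0 + 1)] at hf
          omega
        · rw [addGrain_ne τ h0] at hf
          have hτ : τ (s.getD t 0) < D := hc.hst _
          by_cases hg : D ≤ s.getD t 0 + 1
          · rw [if_pos hg] at hf
            omega
          · rw [if_neg hg] at hf
            omega
      · have h1 : s.take (t + 1) = s := List.take_of_length_le (by omega)
        have h2 : s.take t = s := List.take_of_length_le (by omega)
        rw [h1]; rw [h2] at ih; exact ih
  have := key s.length
  rwa [List.take_of_length_le le_rfl] at this

lemma val_inj (hc : Ctx D τ τ' s) {a b : ℕ} (ha : a < s.length) (hb : b < s.length)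
    (h : s.getD a 0 = s.getD b 0) : a = b := by
  rw [List.getD_eq_getElem _ _ ha, List.getD_eq_getElem _ _ hb] at h
  exact ((s_nodup hc).getElem_inj_iff).1 h

lemma mem_take_pos {x t : ℕ} (hx : x ∈ s.take t) :
    ∃ t', t' < t ∧ t' < s.length ∧ s.getD t' 0 = x := by
  obtain ⟨i, hi, hval⟩ := List.mem_iff_getElem.1 hx
  simp only [List.length_take, lt_min_iff] at hi
  refine ⟨i, hi.1, hi.2, ?_⟩
  rw [List.getD_eq_getElem _ _ hi.2]
  rw [List.getElem_take] at hval
  exact hval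

lemma pos_mem_take {t' t : ℕ} (h1 : t' < t) (h2 : t' < s.length) :
    s.getD t' 0 ∈ s.take t := by
  rw [List.getD_eq_getElem _ _ h2]
  exact List.mem_iff_getElem.2 ⟨t', by simp [h1, h2], by rw [List.getElem_take]⟩

lemma self_not_mem_take (hc : Ctx D τ τ' s) {t : ℕ} (ht : t < s.length) :
    s.getD t 0 ∉ s.take t := by
  intro hmem
  obtain ⟨t', h1, h2, h3⟩ := mem_take_pos hmem
  have := val_inj hc h2 ht h3
  omega

/-- If a column `c ≥ 1` fires at `t` and was not fired before, then one of its two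
possible suppliers fired earlier. -/
lemma cause (hc : Ctx D τ τ' s) {t : ℕ} (ht : t < s.length) (h1 : 1 ≤ s.getD t 0)
    (h0 : s.getD t 0 ∉ s.take t) :
    (s.getD t 0 + 1) ∈ s.take t ∨
      (D ≤ s.getD t 0 + 1 ∧ s.getD t 0 + 1 - D ∈ s.take t) := by
  have hfire : D ≤ applyStrat D (addGrain τ) (s.take t) (s.getD t 0) := legal_at hc ht
  have hf := height_formula hc.hD (legal_take hc t) (s.getD t 0)
  have hcnt0 : (s.take t).count (s.getD t 0) = 0 := List.count_eq_zero.2 h0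
  rw [hcnt0, addGrain_ne τ (by omega)] at hf
  have hτ : τ (s.getD t 0) < D := hc.hst _
  have hD := hc.hD
  by_cases hm1 : (s.getD t 0 + 1) ∈ s.take t
  · exact Or.inl hm1
  · have hc1 : (s.take t).count (s.getD t 0 + 1) = 0 := List.count_eq_zero.2 hm1
    rw [hc1] at hf
    by_cases hg : D ≤ s.getD t 0 + 1
    · rw [if_pos hg] at hf
      refine Or.inr ⟨hg, ?_⟩
      rw [← List.count_pos_iff]
      omega
    · rw [if_neg hg] at hf
      omega

/-- First position whose value satisfies `P`. -/
lemma firstP (P : ℕ → Prop) [DecidablePred P]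
    (h : ∃ t, t < s.length ∧ P (s.getD t 0)) :
    ∃ t, t < s.length ∧ P (s.getD t 0) ∧ ∀ t' < t, ¬ P (s.getD t' 0) := by
  classical
  have h' : ∃ t, t < s.length ∧ P (s.getD t 0) := h
  refine ⟨Nat.find h', (Nat.find_spec h').1, (Nat.find_spec h').2, fun t' ht' => ?_⟩
  intro hP
  exact Nat.find_min h' ht' ⟨lt_trans ht' (Nat.find_spec h').1, hP⟩

lemma count_take_mono {w t0 ty : ℕ} (h : t0 ≤ ty) :
    (s.take t0).count w ≤ (s.take ty).count w := by
  have h1 : s.take t0 = (s.take ty).take t0 := by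
    rw [List.take_take, min_eq_left h]
  rw [h1]
  exact (List.take_sublist _ _).count_le _

lemma count_window {w t0 ty : ℕ}
    (h : (s.take t0).count w < (s.take ty).count w) :
    ∃ t3, t0 ≤ t3 ∧ t3 < ty ∧ t3 < s.length ∧ s.getD t3 0 = w := by
  have hty : t0 ≤ ty := by
    by_contra hh
    have := count_take_mono (s := s) (w := w) (le_of_lt (not_le.1 hh))
    omega
  rw [show ty = t0 + (ty - t0) by omega, List.take_add, List.count_append] at h
  have hpos : 0 < ((s.drop t0).take (ty - t0)).count w := by omega
  have hm : w ∈ (s.drop t0).take (ty - t0) := List.count_pos_iff.1 hpos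
  obtain ⟨i, hi, hval⟩ := List.mem_iff_getElem.1 hm
  simp only [List.length_take, List.length_drop, lt_min_iff] at hi
  refine ⟨t0 + i, by omega, by omega, by omega, ?_⟩
  rw [List.getElem_take, List.getElem_drop] at hval
  rw [List.getD_eq_getElem _ _ (by omega)]
  exact hval

/-- If `y` fired at `ty` but was not fireable at an earlier moment `t0` (because a
larger column fired there), then one of its suppliers fired in the window `[t0, ty)`. -/
lemma flip (hc : Ctx D τ τ' s) {t0 ty : ℕ} (h0 : t0 < ty) (hy : ty < s.length)
    (hlt : s.getD ty 0 < s.getD t0 0) :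
    ∃ t3, t0 ≤ t3 ∧ t3 < ty ∧ t3 < s.length ∧
      (s.getD t3 0 = s.getD ty 0 + 1 ∨
        (D ≤ s.getD ty 0 + 1 ∧ s.getD t3 0 = s.getD ty 0 + 1 - D)) := by
  have hD := hc.hD
  have ht0 : t0 < s.length := lt_trans h0 hy
  have hnf : ¬ D ≤ applyStrat D (addGrain τ) (s.take t0) (s.getD ty 0) :=
    not_fireable hc ht0 hlt
  have hfire : D ≤ applyStrat D (addGrain τ) (s.take ty) (s.getD ty 0) := legal_at hc hy
  have hf0 := height_formula hc.hD (legal_take hc t0) (s.getD ty 0)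
  have hfy := height_formula hc.hD (legal_take hc ty) (s.getD ty 0)
  have hny : (s.take ty).count (s.getD ty 0) = 0 :=
    List.count_eq_zero.2 (self_not_mem_take hc hy)
  have hn0 : (s.take t0).count (s.getD ty 0) = 0 := by
    have := count_take_mono (s := s) (w := s.getD ty 0) (le_of_lt h0)
    omega
  rw [hny] at hfy
  rw [hn0] at hf0
  by_cases hc1 : (s.take t0).count (s.getD ty 0 + 1) < (s.take ty).count (s.getD ty 0 + 1)
  · obtain ⟨t3, ha, hb, hcl, hv⟩ := count_window hc1
    exact ⟨t3, ha, hb, hcl, Or.inl hv⟩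
  · have he1 : (s.take ty).count (s.getD ty 0 + 1) = (s.take t0).count (s.getD ty 0 + 1) := by
      have := count_take_mono (s := s) (w := s.getD ty 0 + 1) (le_of_lt h0)
      omega
    rw [he1] at hfy
    by_cases hg : D ≤ s.getD ty 0 + 1
    · rw [if_pos hg] at hf0 hfy
      have hc2 : (s.take t0).count (s.getD ty 0 + 1 - D)
          < (s.take ty).count (s.getD ty 0 + 1 - D) := by
        by_contra hh
        have := count_take_mono (s := s) (w := s.getD ty 0 + 1 - D) (le_of_lt h0)
        omega
      obtain ⟨t3, ha, hb, hcl, hv⟩ := count_window hc2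
      exact ⟨t3, ha, hb, hcl, Or.inr ⟨hg, hv⟩⟩
    · rw [if_neg hg] at hf0 hfy
      omega

/-- Main ordering lemma: a column cannot fire after a column at distance `≥ D-1` above it. -/
lemma inv_order (hc : Ctx D τ τ' s) :
    ∀ ty tx, tx < ty → ty < s.length → s.getD ty 0 + (D - 1) ≤ s.getD tx 0 → False := by
  have hD := hc.hD
  intro ty
  induction ty using Nat.strong_induction_on with
  | _ ty IH =>
    intro tx h1 h2 h3
    have hyx : s.getD ty 0 < s.getD tx 0 := by omega
    obtain ⟨t3, h30, h3y, h3l, hw⟩ := flip hc h1 h2 hyx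
    rcases hw with hw | ⟨hg, hw⟩
    · by_cases hcase : s.getD ty 0 + 1 + (D - 1) ≤ s.getD tx 0
      · have hne : t3 ≠ tx := by
          intro e; rw [e] at hw; omega
        exact IH t3 h3y tx (by omega) h3l (by omega)
      · have hx : s.getD tx 0 = s.getD ty 0 + (D - 1) := by omega
        have htxl : tx < s.length := lt_trans h1 h2
        have hxnotin : s.getD tx 0 ∉ s.take tx := self_not_mem_take hc htxl
        rcases cause hc htxl (by omega) hxnotin with hm | ⟨hg2, hm⟩
        · obtain ⟨t4, ht4tx, ht4l, hval4⟩ := mem_take_pos hm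
          exact IH t3 h3y t4 (by omega) h3l (by omega)
        · obtain ⟨t5, ht5tx, ht5l, hval5⟩ := mem_take_pos hm
          have h5y : t5 = ty := val_inj hc ht5l h2 (by omega)
          omega
    · have hne : t3 ≠ tx := by
        intro e; rw [e] at hw; omega
      exact IH t3 h3y tx (by omega) h3l (by omega)

lemma final_height (hc : Ctx D τ τ' s) (j : ℕ) :
    τ' j + D * s.count j
      = addGrain τ j + (D - 1) * s.count (j + 1)
        + (if D ≤ j + 1 then s.count (j + 1 - D) else 0) := by
  have h := height_formula hc.hD hc.hleg j
  rw [hc.happ] at h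
  exact h

lemma elem_le_pq (hc : Ctx D τ τ' s) {pq : ℕ}
    (hpqmax : ∀ p : ℕ, IsPeakVal s p → p ≤ pq) {c : ℕ} (hcm : c ∈ s) : c ≤ pq := by
  obtain ⟨tc, htc, hvc⟩ := List.mem_iff_getElem.1 hcm
  have hex : ∃ t, t < s.length ∧ c ≤ s.getD t 0 :=
    ⟨tc, htc, by rw [List.getD_eq_getElem _ _ htc, hvc]⟩
  obtain ⟨t0, ht0, hPt0, hmin⟩ := firstP (fun v => c ≤ v) hex
  have hpk : IsPeakVal s (s.getD t0 0) := by
    refine ⟨t0, ⟨ht0, fun t' ht' => ?_⟩, rfl⟩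
    have := hmin t' ht'
    omega
  exact le_trans hPt0 (hpqmax _ hpk)

lemma claim1 (hc : Ctx D τ τ' s) {l pq : ℕ}
    (hl : ∀ i : ℕ, l ≤ i → i < l + D - 1 → i ∈ s)
    (hpq : IsPeakVal s pq) (hpqmax : ∀ p : ℕ, IsPeakVal s p → p ≤ pq) :
    ∀ j, l ≤ j → j ≤ pq → j ∈ s := by
  have hD := hc.hD
  intro j
  induction j using Nat.strong_induction_on with
  | _ j IH =>
    intro hjl hjpq
    by_cases hsm : j < l + D - 1
    · exact hl j hjl hsm
    · push_neg at hsm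
      by_contra hjns
      -- Step A: the whole window [j, j+D-1] is unfired
      have stepA : ∀ i, i ≤ D - 1 → j + i ∉ s := by
        intro i
        induction i with
        | zero => intro _; simpa using hjns
        | succ i ihi =>
          intro hiD
          have hji : j + i ∉ s := ihi (by omega)
          have hfired : j + i + 1 - D ∈ s := by
            refine IH (j + i + 1 - D) (by omega) (by omega) (by omega)
          have hf := final_height hc (j + i)
          rw [if_pos (by omega : D ≤ j + i + 1)] at hf
          have hcnt0 : s.count (j + i) = 0 := List.count_eq_zero.2 hji
          have hcnt2 : 1 ≤ s.count (j + i + 1 - D) := List.count_pos_iff.2 hfired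
          have hτ' : τ' (j + i) < D := hc.hst' (j + i)
          intro hmem
          have h1 : 1 ≤ s.count (j + i + 1) := List.count_pos_iff.2 hmem
          have h2 : (D - 1) * 1 ≤ (D - 1) * s.count (j + i + 1) :=
            Nat.mul_le_mul_left (D - 1) h1
          rw [hcnt0] at hf
          omega
      -- pq is fired, j < pq
      have hpqmem : pq ∈ s := by
        obtain ⟨t, ⟨htl, _⟩, hv⟩ := hpq
        rw [← hv, List.getD_eq_getElem _ _ htl]
        exact List.getElem_mem htl
      have hjlt : j < pq := by
        rcases lt_or_eq_of_le hjpq with h | h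
        · exact h
        · exact absurd (h ▸ hpqmem) hjns
      -- first fired column above j
      have hex : ∃ t, t < s.length ∧ j < s.getD t 0 := by
        obtain ⟨tc, htc, hvc⟩ := List.mem_iff_getElem.1 hpqmem
        exact ⟨tc, htc, by rw [List.getD_eq_getElem _ _ htc, hvc]; omega⟩
      obtain ⟨t0, ht0, hPt0, hminP⟩ := firstP (fun v => j < v) hex
      have hcle : s.getD t0 0 ≤ pq := by
        refine elem_le_pq hc hpqmax ?_
        rw [List.getD_eq_getElem _ _ ht0]
        exact List.getElem_mem ht0
      have hcnotin : s.getD t0 0 ∉ s.take t0 := self_not_mem_take hc ht0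
      rcases cause hc ht0 (by omega) hcnotin with hm | ⟨hg, hm⟩
      · obtain ⟨t', ht', _, hval'⟩ := mem_take_pos hm
        have := hminP t' ht'
        omega
      · obtain ⟨t', ht', _, hval'⟩ := mem_take_pos hm
        have hle : s.getD t' 0 ≤ j := by
          have := hminP t' ht'
          omega
        -- so the first fired column above j lies in the dead window
        have hwin : s.getD t0 0 ∈ s := by
          rw [List.getD_eq_getElem _ _ ht0]
          exact List.getElem_mem ht0
        have := stepA (s.getD t0 0 - j) (by omega)
        rw [show j + (s.getD t0 0 - j) = s.getD t0 0 by omega] at this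
        exact this hwin

theorem main (hc : Ctx D τ τ' s) {l pq : ℕ}
    (hl : ∀ i : ℕ, l ≤ i → i < l + D - 1 → i ∈ s)
    (hpq : IsPeakVal s pq) (hpqmax : ∀ p : ℕ, IsPeakVal s p → p ≤ pq) :
    ∀ p : ℕ, l + D - 1 ≤ p →
      (IsPeakVal s p ↔ (p ≤ pq + D - 1 ∧ τ p = D - 1)) := by
  have hD := hc.hD
  intro p hp
  constructor
  · -- forward direction
    rintro ⟨t, ⟨htl, hpk⟩, rfl⟩
    refine ⟨by have := hpqmax _ ⟨t, ⟨htl, hpk⟩, rfl⟩; omega, ?_⟩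
    have hfire : D ≤ applyStrat D (addGrain τ) (s.take t) (s.getD t 0) := legal_at hc htl
    have hf := height_formula hc.hD (legal_take hc t) (s.getD t 0)
    have hc0 : (s.take t).count (s.getD t 0) = 0 :=
      List.count_eq_zero.2 (self_not_mem_take hc htl)
    have hc1 : (s.take t).count (s.getD t 0 + 1) = 0 := by
      rw [List.count_eq_zero]
      intro hmem
      obtain ⟨t', ht', _, hval'⟩ := mem_take_pos hmem
      have := hpk t' ht'
      omega
    have hc2 : (s.take t).count (s.getD t 0 + 1 - D) ≤ 1 :=
      List.nodup_iff_count_le_one.1 ((s.take_sublist t).nodup (s_nodup hc)) _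
    rw [hc0, hc1, if_pos (by omega : D ≤ s.getD t 0 + 1),
      addGrain_ne τ (by omega), Nat.mul_zero, Nat.mul_zero] at hf
    have hτ : τ (s.getD t 0) < D := hc.hst _
    omega
  · -- backward direction
    rintro ⟨hp1, hp2⟩
    have hzmem : (p + 1 - D) ∈ s := claim1 hc hl hpq hpqmax _ (by omega) (by omega)
    -- p itself fires
    have hpmem : p ∈ s := by
      by_contra hpn
      have hf := final_height hc p
      rw [if_pos (by omega : D ≤ p + 1), List.count_eq_zero.2 hpn,
        addGrain_ne τ (by omega), hp2] at hf
      have hcnt2 : 1 ≤ s.count (p + 1 - D) := List.count_pos_iff.2 hzmem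
      have hτ' : τ' p < D := hc.hst' p
      omega
    obtain ⟨tp, htp, hvtp⟩ := List.mem_iff_getElem.1 hpmem
    have hvtp' : s.getD tp 0 = p := by rw [List.getD_eq_getElem _ _ htp, hvtp]
    -- first position with value ≥ p
    have hex : ∃ t, t < s.length ∧ p ≤ s.getD t 0 := ⟨tp, htp, by omega⟩
    obtain ⟨t0, ht0, hbp, hminP⟩ := firstP (fun v => p ≤ v) hex
    by_cases hb : s.getD t0 0 = p
    · refine ⟨t0, ⟨ht0, fun t' ht' => ?_⟩, hb⟩
      have := hminP t' ht'
      omega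
    · exfalso
      have hbgt : p < s.getD t0 0 := by omega
      have ht0tp : t0 < tp := by
        have h1 : ¬ tp < t0 := fun h => by have := hminP tp h; omega
        have h2 : t0 ≠ tp := fun h => by rw [h, hvtp'] at hb; exact hb rfl
        omega
      -- p is not fireable at t0, hence p+1-D has not fired before t0
      have hnf : ¬ D ≤ applyStrat D (addGrain τ) (s.take t0) p := not_fireable hc ht0 hbgt
      have hf0 := height_formula hc.hD (legal_take hc t0) p
      have hcp : (s.take t0).count p = 0 := by
        rw [List.count_eq_zero]
        intro hmem
        obtain ⟨t', ht', _, hv⟩ := mem_take_pos hmem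
        have := hminP t' ht'
        omega
      have hcp1 : (s.take t0).count (p + 1) = 0 := by
        rw [List.count_eq_zero]
        intro hmem
        obtain ⟨t', ht', _, hv⟩ := mem_take_pos hmem
        have := hminP t' ht'
        omega
      rw [hcp, hcp1, if_pos (by omega : D ≤ p + 1), addGrain_ne τ (by omega), hp2,
        Nat.mul_zero, Nat.mul_zero] at hf0
      have hznot : p + 1 - D ∉ s.take t0 := by
        intro hmem
        have : 1 ≤ (s.take t0).count (p + 1 - D) := List.count_pos_iff.2 hmem
        omega
      obtain ⟨tz, htz, hvtz⟩ := List.mem_iff_getElem.1 hzmem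
      have hvtz' : s.getD tz 0 = p + 1 - D := by rw [List.getD_eq_getElem _ _ htz, hvtz]
      have htz0 : t0 < tz := by
        have h1 : ¬ tz < t0 := by
          intro h
          exact hznot (hvtz' ▸ pos_mem_take h htz)
        have h2 : tz ≠ t0 := by
          intro h
          rw [h] at hvtz'
          omega
        omega
      have htztp : tz < tp := by
        by_contra hh
        push_neg at hh
        have h2 : tp ≠ tz := by
          intro h
          rw [← h, hvtp'] at hvtz'
          omega
        exact inv_order hc tz tp (by omega) htz (by rw [hvtz', hvtp']; omega)
      have NL : ∀ tw, tw < tp → t0 < tw → s.getD tw 0 < p → False := by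
        intro tw
        induction tw using Nat.strong_induction_on with
        | _ tw IH2 =>
          intro hwtp hw0 hwp
          have hwlen : tw < s.length := lt_trans hwtp htp
          obtain ⟨t3, h30, h3w, h3l, hE⟩ := flip hc hw0 hwlen (by omega)
          have h3tp : t3 < tp := lt_trans h3w hwtp
          rcases hE with hE | ⟨hg, hE⟩
          · have h3ne : t3 ≠ t0 := by
              intro e
              rw [e] at hE
              omega
            have h3p : s.getD t3 0 ≠ p := by
              intro e
              have h4 : t3 = tp := val_inj hc h3l htp (by rw [e, hvtp'])
              omega
            exact IH2 t3 h3w h3tp (by omega) (by omega)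
          · have h3ne : t3 ≠ t0 := by
              intro e
              rw [e] at hE
              omega
            exact IH2 t3 h3w h3tp (by omega) (by omega)
      exact NL tz htztp htz0 (by omega)
  
end Ctx

end KA

/-- Beyond a block l,…,l+D-2 of fired columns, the peaks of the avalanche are exactly
the columns p ≤ p_q + D - 1 with π(k-1)_p = D - 1, where p_q is the greatest peak. -/
theorem peak_characterization (D k l pq : ℕ) (hD : 2 ≤ D) (hk : 1 ≤ k)
    (s : List ℕ) (τ τ' : ℕ → ℕ) (hτ : IsPi D (k - 1) τ) (hτ' : IsPi D k τ')
    (hav : IsAvalancheFor D τ τ' s)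
    (hl : ∀ i : ℕ, l ≤ i → i < l + D - 1 → i ∈ s)
    (hpq : IsPeakVal s pq) (hpqmax : ∀ p : ℕ, IsPeakVal s p → p ≤ pq) :
    ∀ p : ℕ, l + D - 1 ≤ p →
      (IsPeakVal s p ↔ (p ≤ pq + D - 1 ∧ τ p = D - 1)) := by
  obtain ⟨hleg, happ, hmin⟩ := hav
  exact KA.main ⟨hD, hτ.2, hτ'.2, hleg, happ, hmin⟩ hl hpq hpqmax
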